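/- With the SBAL function L(y) = −ρ b^T y + Σ_i h(ρ x_i − c_i + A_i^T y) as above, for all u, v ∈ ℝ^m: L(u) ≤ L(v) + ∇L(v)^T(u−v) + (1/2)(u−v)^T A A^T (u−v). That is, the quadratic surrogate with Hessian A A^T majorizes L. -/

import Mathlib

open Matrix

noncomputable def sbal_s (μ ρ t : ℝ) : ℝ := (Real.sqrt (t ^ 2 + 4 * ρ * μ) - t) / 2
noncomputable def sbal_z (μ ρ t : ℝ) : ℝ := (Real.sqrt (t ^ 2 + 4 * ρ * μ) + t) / 2
noncomputable def sbal_h (μ ρ t : ℝ) : ℝ :=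
  -(ρ * μ) * Real.log (sbal_s μ ρ t) + (sbal_z μ ρ t) ^ 2 / 2

section aux
variable {μ ρ : ℝ}

lemma abs_lt_sqrt (hμ : 0 < μ) (hρ : 0 < ρ) (t : ℝ) : |t| < Real.sqrt (t ^ 2 + 4 * ρ * μ) := by
  rw [show |t| = Real.sqrt (t^2) by rw [Real.sqrt_sq_eq_abs]]
  apply Real.sqrt_lt_sqrt (sq_nonneg t)
  nlinarith [mul_pos hρ hμ]

lemma sbal_s_pos (hμ : 0 < μ) (hρ : 0 < ρ) (t : ℝ) : 0 < sbal_s μ ρ t := by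
  have := abs_lt_sqrt (μ := μ) (ρ := ρ) hμ hρ t
  have := abs_nonneg t
  unfold sbal_s
  cases abs_cases t <;> linarith

lemma sbal_z_pos (hμ : 0 < μ) (hρ : 0 < ρ) (t : ℝ) : 0 < sbal_z μ ρ t := by
  have := abs_lt_sqrt (μ := μ) (ρ := ρ) hμ hρ t
  have := abs_nonneg t
  unfold sbal_z
  cases abs_cases t <;> linarith

lemma sbal_sz (hμ : 0 < μ) (hρ : 0 < ρ) (t : ℝ) : sbal_s μ ρ t * sbal_z μ ρ t = ρ * μ := by
  have h : Real.sqrt (t ^ 2 + 4 * ρ * μ) ^ 2 = t ^ 2 + 4 * ρ * μ :=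
    Real.sq_sqrt (by nlinarith [mul_pos hρ hμ])
  unfold sbal_s sbal_z
  nlinarith [mul_pos hρ hμ, h]

lemma sbal_h_deriv (hμ : 0 < μ) (hρ : 0 < ρ) (t : ℝ) : HasDerivAt (sbal_h μ ρ) (sbal_z μ ρ t) t := by
  have hpos : (0:ℝ) < t ^ 2 + 4 * ρ * μ := by nlinarith [mul_pos hρ hμ]
  set R := Real.sqrt (t ^ 2 + 4 * ρ * μ) with hR
  have hRpos : 0 < R := Real.sqrt_pos.mpr hpos
  have hq : HasDerivAt (fun t : ℝ => t ^ 2 + 4 * ρ * μ) (2 * t) t := by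
    simpa using ((hasDerivAt_pow 2 t).add_const (4 * ρ * μ))
  have hsqrt : HasDerivAt (fun t : ℝ => Real.sqrt (t ^ 2 + 4 * ρ * μ)) (t / R) t := by
    have := (Real.hasDerivAt_sqrt (ne_of_gt hpos)).comp t hq
    refine this.congr_deriv ?_
    field_simp
    ring
  have hs : HasDerivAt (sbal_s μ ρ) ((t / R - 1) / 2) t := by
    unfold sbal_s
    exact ((hsqrt.sub (hasDerivAt_id t)).div_const 2)
  have hz : HasDerivAt (sbal_z μ ρ) ((t / R + 1) / 2) t := by
    unfold sbal_z
    exact ((hsqrt.add (hasDerivAt_id t)).div_const 2)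
  have hspos := sbal_s_pos (μ := μ) (ρ := ρ) hμ hρ t
  have hlog : HasDerivAt (fun t => Real.log (sbal_s μ ρ t))
      (((t / R - 1) / 2) / sbal_s μ ρ t) t := hs.log (ne_of_gt hspos)
  have hmain : HasDerivAt (sbal_h μ ρ)
      (-(ρ * μ) * (((t / R - 1) / 2) / sbal_s μ ρ t)
        + sbal_z μ ρ t * ((t / R + 1) / 2)) t := by
    unfold sbal_h
    have h2 : HasDerivAt (fun t => (sbal_z μ ρ t) ^ 2 / 2)
        (sbal_z μ ρ t * ((t / R + 1) / 2)) t := by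
      have := ((hz.pow 2).div_const 2)
      refine this.congr_deriv ?_
      norm_num
      ring
    exact (hlog.const_mul (-(ρ * μ))).add h2
  convert hmain using 1
  have hsz := sbal_sz (μ := μ) (ρ := ρ) hμ hρ t
  rw [← hsz]
  field_simp
  ring

lemma sbal_z_lip (hμ : 0 < μ) (hρ : 0 < ρ) (a b : ℝ) : |sbal_z μ ρ a - sbal_z μ ρ b| ≤ |a - b| := by
  set Ra := Real.sqrt (a ^ 2 + 4 * ρ * μ) with hRa
  set Rb := Real.sqrt (b ^ 2 + 4 * ρ * μ) with hRb
  have haa : |a| < Ra := abs_lt_sqrt hμ hρ a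
  have hbb : |b| < Rb := abs_lt_sqrt hμ hρ b
  have hRa2 : Ra ^ 2 = a ^ 2 + 4 * ρ * μ := Real.sq_sqrt (by nlinarith [mul_pos hρ hμ])
  have hRb2 : Rb ^ 2 = b ^ 2 + 4 * ρ * μ := Real.sq_sqrt (by nlinarith [mul_pos hρ hμ])
  have hsum : 0 < Ra + Rb := by
    have := abs_nonneg a; have := abs_nonneg b; linarith
  have key : |Ra - Rb| ≤ |a - b| := by
    have hfact : (Ra - Rb) * (Ra + Rb) = (a - b) * (a + b) := by nlinarith [mul_pos hρ hμ]
    have h1 : |Ra - Rb| * (Ra + Rb) = |a - b| * |a + b| := by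
      rw [← abs_of_pos hsum, ← abs_mul, hfact, abs_mul]
    have h2 : |a + b| ≤ Ra + Rb := by
      calc |a + b| ≤ |a| + |b| := abs_add_le a b
        _ ≤ Ra + Rb := by linarith
    have h5 := mul_le_mul_of_nonneg_left h2 (abs_nonneg (a - b))
    rw [← h1] at h5
    exact le_of_mul_le_mul_right h5 hsum
  unfold sbal_z
  rw [← hRa, ← hRb]
  have : (Ra + a) / 2 - (Rb + b) / 2 = ((Ra - Rb) + (a - b)) / 2 := by ring
  rw [this]
  have h3 := abs_add_le (Ra - Rb) (a - b)
  have h4 : |((Ra - Rb) + (a - b)) / 2| = |(Ra - Rb) + (a - b)| / 2 := by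
    rw [abs_div]; norm_num
  rw [h4]; linarith

lemma sbal_key (hμ : 0 < μ) (hρ : 0 < ρ) (t t' : ℝ) :
    sbal_h μ ρ t' ≤ sbal_h μ ρ t + sbal_z μ ρ t * (t' - t) + (t' - t) ^ 2 / 2 := by
  set G : ℝ → ℝ := fun w => sbal_h μ ρ w - sbal_z μ ρ t * w - (w - t) ^ 2 / 2 with hGdef
  have hG : ∀ w, HasDerivAt G (sbal_z μ ρ w - sbal_z μ ρ t - (w - t)) w := by
    intro w
    have h1 := sbal_h_deriv hμ hρ w
    have h2 : HasDerivAt (fun w : ℝ => sbal_z μ ρ t * w) (sbal_z μ ρ t) w := by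
      simpa using (hasDerivAt_id w).const_mul (sbal_z μ ρ t)
    have h3 : HasDerivAt (fun w : ℝ => (w - t) ^ 2 / 2) (w - t) w := by
      have := (((hasDerivAt_id w).sub_const t).pow 2).div_const 2
      simpa using this
    exact (h1.sub h2).sub h3
  have hcont : ∀ s : Set ℝ, ContinuousOn G s := fun s w _ =>
    (hG w).continuousAt.continuousWithinAt
  have hGle : G t' ≤ G t := by
    rcases le_total t t' with h | h
    · have hanti : AntitoneOn G (Set.Icc t t') := by
        apply antitoneOn_of_deriv_nonpos (convex_Icc t t') (hcont _)
          (fun w _ => (hG w).differentiableAt.differentiableWithinAt)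
        intro w hw
        rw [(hG w).deriv]
        rw [interior_Icc] at hw
        have hzl := sbal_z_lip (μ := μ) (ρ := ρ) hμ hρ w t
        have := abs_le.mp hzl
        have : sbal_z μ ρ w - sbal_z μ ρ t ≤ |w - t| := le_trans (le_abs_self _) hzl
        rw [abs_of_nonneg (by linarith [hw.1] : (0:ℝ) ≤ w - t)] at this
        linarith
      exact hanti (Set.left_mem_Icc.mpr h) (Set.right_mem_Icc.mpr h) h
    · have hmono : MonotoneOn G (Set.Icc t' t) := by
        apply monotoneOn_of_deriv_nonneg (convex_Icc t' t) (hcont _)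
          (fun w _ => (hG w).differentiableAt.differentiableWithinAt)
        intro w hw
        rw [(hG w).deriv]
        rw [interior_Icc] at hw
        have hzl := sbal_z_lip (μ := μ) (ρ := ρ) hμ hρ t w
        have h1 : sbal_z μ ρ t - sbal_z μ ρ w ≤ |t - w| := le_trans (le_abs_self _) hzl
        rw [abs_of_nonneg (by linarith [hw.2] : (0:ℝ) ≤ t - w)] at h1
        linarith
      exact hmono (Set.left_mem_Icc.mpr h) (Set.right_mem_Icc.mpr h) h
  have := hGle
  simp only [hGdef] at this
  nlinarith [this]

end aux

theorem stmt5 {m n : ℕ} (A : Matrix (Fin m) (Fin n) ℝ) (b : Fin m → ℝ) (c x : Fin n → ℝ)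
    (μ ρ : ℝ) (hμ : 0 < μ) (hρ : 0 < ρ)
    (L : (Fin m → ℝ) → ℝ)
    (hL : ∀ y, L y = -(ρ * (b ⬝ᵥ y)) + ∑ j, sbal_h μ ρ (ρ * x j - c j + (Aᵀ *ᵥ y) j)) :
    ∀ u v : Fin m → ℝ,
      L u ≤ L v
        + (A *ᵥ (fun j => sbal_z μ ρ (ρ * x j - c j + (Aᵀ *ᵥ v) j)) - ρ • b) ⬝ᵥ (u - v)
        + (1 / 2) * ((u - v) ⬝ᵥ ((A * Aᵀ) *ᵥ (u - v))) := by
  intro u v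
  set d : Fin m → ℝ := u - v with hd
  set w : Fin n → ℝ := fun j => ρ * x j - c j + (Aᵀ *ᵥ v) j with hw
  set e : Fin n → ℝ := Aᵀ *ᵥ d with he
  have hAu : ∀ j, ρ * x j - c j + (Aᵀ *ᵥ u) j = w j + e j := by
    intro j
    have : (Aᵀ *ᵥ u) j = (Aᵀ *ᵥ v) j + (Aᵀ *ᵥ d) j := by
      rw [hd, Matrix.mulVec_sub]
      simp
    simp [hw, this]
    ring
  -- sum inequality
  have hsum : ∑ j, sbal_h μ ρ (ρ * x j - c j + (Aᵀ *ᵥ u) j)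
      ≤ ∑ j, (sbal_h μ ρ (w j) + sbal_z μ ρ (w j) * e j + (e j) ^ 2 / 2) := by
    apply Finset.sum_le_sum
    intro j _
    rw [hAu j]
    have := sbal_key hμ hρ (w j) (w j + e j)
    simpa using this
  -- dot product identities
  have hzd : (A *ᵥ (fun j => sbal_z μ ρ (w j))) ⬝ᵥ d = ∑ j, sbal_z μ ρ (w j) * e j := by
    rw [dotProduct_comm, Matrix.dotProduct_mulVec, he, Matrix.mulVec_transpose]
    simp [dotProduct, mul_comm]
  have hdd : d ⬝ᵥ ((A * Aᵀ) *ᵥ d) = ∑ j, (e j) ^ 2 := by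
    rw [← Matrix.mulVec_mulVec, Matrix.dotProduct_mulVec, he, Matrix.mulVec_transpose]
    simp [dotProduct, sq]
  have hbd : b ⬝ᵥ u = b ⬝ᵥ v + b ⬝ᵥ d := by
    rw [hd, dotProduct_sub]; ring
  have hsmul : (ρ • b) ⬝ᵥ d = ρ * (b ⬝ᵥ d) := smul_dotProduct ρ b d
  rw [hL u, hL v, sub_dotProduct, hsmul, hzd]
  rw [hbd]
  rw [Finset.sum_add_distrib, Finset.sum_add_distrib] at hsum
  have hhalf : (1:ℝ)/2 * (d ⬝ᵥ ((A * Aᵀ) *ᵥ d)) = ∑ j, (e j)^2 / 2 := by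
    rw [hdd, Finset.mul_sum]; congr 1; funext j; ring
  rw [hhalf]
  linarith [hsum]
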